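/- arXiv:1509.06831 — 2 statements merged into one kernel-verified Lean document; each statement's English description precedes it below -/
import Mathlib

section
/- (Niederreiter's formula for the one-dimensional star discrepancy.) Let x_1, …, x_n ∈ [0,1] and let x_(1) ≤ x_(2) ≤ … ≤ x_(n) be the points arranged in nondecreasing order. Then D*_n(x_1, …, x_n) = 1/(2n) + max_{1 ≤ i ≤ n} | x_(i) − (2i − 1)/(2n) |. -/
noncomputable section

/-- One-dimensional star discrepancy of a finite family of points in `[0,1]`. -/
def starDisc1 {ι : Type*} [Fintype ι] (y : ι → ℝ) : ℝ :=
  sSup {v : ℝ | ∃ a : ℝ, a ∈ Set.Icc (0 : ℝ) 1 ∧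
    v = |((Finset.univ.filter fun i : ι => y i < a).card : ℝ) / (Fintype.card ι : ℝ) - a|}

end

/-- **Niederreiter's formula** for the one-dimensional star discrepancy: if
`x (σ 0) ≤ x (σ 1) ≤ … ≤ x (σ (n-1))` is the nondecreasing rearrangement of the points,
then `D*_n = 1/(2n) + max_i |x_(i) − (2i − 1)/(2n)|` (with `i` running from `1` to `n`). -/
theorem starDisc1_formula {n : ℕ} (hn : 0 < n) (x : Fin n → ℝ)
    (hx : ∀ i, x i ∈ Set.Icc (0 : ℝ) 1)
    (σ : Equiv.Perm (Fin n)) (hσ : Monotone (x ∘ σ)) :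
    starDisc1 x = 1 / (2 * n) +
      Finset.univ.sup' (Finset.univ_nonempty_iff.mpr ⟨⟨0, hn⟩⟩)
        (fun i : Fin n => |x (σ i) - (2 * (i : ℝ) + 1) / (2 * n)|) := by
  classical
  have hne : (Finset.univ : Finset (Fin n)).Nonempty := ⟨⟨0, hn⟩, Finset.mem_univ _⟩
  set y : Fin n → ℝ := x ∘ σ with hy_def
  have hmono : Monotone y := hσ
  have hy : ∀ i, y i ∈ Set.Icc (0 : ℝ) 1 := fun i => hx (σ i)
  have hnR : (0 : ℝ) < n := by exact_mod_cast hn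
  have hnne : (n : ℝ) ≠ 0 := ne_of_gt hnR
  set T : Fin n → ℝ := fun i : Fin n => |y i - (2 * (i : ℝ) + 1) / (2 * n)| with hT
  set M : ℝ := 1 / (2 * n) + Finset.univ.sup' hne T with hM
  set N : ℝ → ℕ := fun a => (Finset.univ.filter fun i => y i < a).card with hN
  -- the count is invariant under the permutation
  have hcard : ∀ a : ℝ, ((Finset.univ.filter fun i : Fin n => x i < a).card) = N a := by
    intro a
    refine (Finset.card_bij (fun i _ => σ i) ?_ ?_ ?_).symm
    · intro i hi
      simp only [Finset.mem_filter, Finset.mem_univ, true_and] at hi ⊢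
      exact hi
    · intro i _ j _ h
      exact σ.injective h
    · intro j hj
      refine ⟨σ.symm j, ?_, by simp⟩
      simp only [Finset.mem_filter, Finset.mem_univ, true_and] at hj ⊢
      simpa [hy_def, Function.comp] using hj
  have hNle : ∀ a : ℝ, N a ≤ n := fun a => by
    simpa using Finset.card_filter_le Finset.univ (fun i : Fin n => y i < a)
  -- key counting claims
  have claimA : ∀ (a : ℝ) (j : Fin n), (j : ℕ) + 1 ≤ N a → y j < a := by
    intro a j hj
    by_contra h
    push_neg at h
    have hsub : (Finset.univ.filter fun i => y i < a) ⊆ Finset.Iio j := by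
      intro i hi
      simp only [Finset.mem_filter, Finset.mem_univ, true_and] at hi
      rw [Finset.mem_Iio]
      by_contra hij
      push_neg at hij
      exact absurd (lt_of_lt_of_le hi h) (not_lt.mpr (hmono hij))
    have h2 : N a ≤ (j : ℕ) := by
      have h := Finset.card_le_card hsub
      rwa [Fin.card_Iio] at h
    omega
  have claimD : ∀ (a : ℝ) (i : Fin n), y i < a → (i : ℕ) + 1 ≤ N a := by
    intro a i hi
    have hsub : Finset.Iic i ⊆ (Finset.univ.filter fun j => y j < a) := by
      intro j hj
      rw [Finset.mem_Iic] at hj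
      simp only [Finset.mem_filter, Finset.mem_univ, true_and]
      exact lt_of_le_of_lt (hmono hj) hi
    have := Finset.card_le_card hsub
    rwa [Fin.card_Iic] at this
  have claimB : ∀ (a : ℝ) (j : Fin n), N a ≤ (j : ℕ) → a ≤ y j := by
    intro a j hj
    by_contra h
    push_neg at h
    have := claimD a j h
    omega
  have claimC : ∀ i : Fin n, N (y i) ≤ (i : ℕ) := by
    intro i
    by_contra h
    push_neg at h
    exact absurd (claimA (y i) i h) (lt_irrefl _)
  -- rewrite the star discrepancy as a sup over counts of y
  set S : Set ℝ := {v : ℝ | ∃ a : ℝ, a ∈ Set.Icc (0 : ℝ) 1 ∧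
      v = |(N a : ℝ) / (n : ℝ) - a|} with hS
  have hSD : starDisc1 x = sSup S := by
    unfold starDisc1
    congr 1
    ext v
    simp only [hS, Set.mem_setOf_eq, Fintype.card_fin, hcard]
  -- nonnegativity of M
  have hMnn : (0 : ℝ) ≤ M := by
    have h1 : T ⟨0, hn⟩ ≤ Finset.univ.sup' hne T :=
      Finset.le_sup' T (Finset.mem_univ _)
    have h2 : (0 : ℝ) ≤ T ⟨0, hn⟩ := abs_nonneg _
    have h3 : (0 : ℝ) < 1 / (2 * (n : ℝ)) := by positivity
    rw [hM]
    linarith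
  -- upper bound: every element of S is at most M
  have hub : ∀ v ∈ S, v ≤ M := by
    rintro v ⟨a, ⟨ha0, ha1⟩, rfl⟩
    rw [abs_le]
    constructor
    · -- -M ≤ N a / n - a
      rcases eq_or_lt_of_le (hNle a) with heq | hlt
      · have he : ((N a : ℝ)) / n = 1 := by rw [heq]; field_simp
        rw [he]; linarith
      · set j : Fin n := ⟨N a, hlt⟩ with hj
        have hja : a ≤ y j := claimB a j (le_refl _)
        have hTj : T j ≤ Finset.univ.sup' hne T := Finset.le_sup' T (Finset.mem_univ j)
        have habs : y j - (2 * ((j : ℕ) : ℝ) + 1) / (2 * n) ≤ T j := le_abs_self _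
        have hjv : ((j : ℕ) : ℝ) = (N a : ℝ) := rfl
        rw [hjv] at habs
        have e1 : ((N a : ℝ)) / n = (2 * (N a : ℝ)) / (2 * n) := by
          rw [mul_div_mul_left _ _ (two_ne_zero)]
        have e2 : (2 * (N a : ℝ) + 1) / (2 * n) = (2 * (N a : ℝ)) / (2 * n) + 1 / (2 * n) := by
          rw [← add_div]
        rw [e2] at habs
        rw [e1, hM]
        linarith
    · -- N a / n - a ≤ M
      rcases Nat.eq_zero_or_pos (N a) with h0 | hpos
      · rw [h0]
        simp only [Nat.cast_zero, zero_div, zero_sub]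
        linarith
      · have hlt : N a - 1 < n := by have := hNle a; omega
        set j : Fin n := ⟨N a - 1, hlt⟩ with hj
        have hj1 : (j : ℕ) + 1 ≤ N a := by simp [hj]; omega
        have hja : y j < a := claimA a j hj1
        have hTj : T j ≤ Finset.univ.sup' hne T := Finset.le_sup' T (Finset.mem_univ j)
        have habs : (2 * ((j : ℕ) : ℝ) + 1) / (2 * n) - y j ≤ T j := by
          calc (2 * ((j : ℕ) : ℝ) + 1) / (2 * n) - y j
              ≤ |(2 * ((j : ℕ) : ℝ) + 1) / (2 * n) - y j| := le_abs_self _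
            _ = T j := by rw [abs_sub_comm]
        have hjv : ((j : ℕ) : ℝ) = (N a : ℝ) - 1 := by
          have : (j : ℕ) = N a - 1 := rfl
          rw [this, Nat.cast_sub hpos, Nat.cast_one]
        rw [hjv] at habs
        have e1 : ((N a : ℝ)) / n = (2 * (N a : ℝ)) / (2 * n) := by
          rw [mul_div_mul_left _ _ (two_ne_zero)]
        have e2 : (2 * ((N a : ℝ) - 1) + 1) / (2 * n) + 1 / (2 * n) = (2 * (N a : ℝ)) / (2 * n) := by
          rw [← add_div]; ring_nf
        rw [e1, hM]
        linarith
  have hbdd : BddAbove S := ⟨M, hub⟩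
  have hN0 : N 0 = 0 := by
    rw [hN]
    simp only [Finset.card_eq_zero]
    apply Finset.filter_eq_empty_iff.mpr
    intro i _
    exact not_lt.mpr (hy i).1
  have h0S : (0 : ℝ) ∈ S := by
    refine ⟨0, ⟨le_refl _, zero_le_one⟩, ?_⟩
    rw [hN0]
    norm_num
  have hDnn : (0 : ℝ) ≤ sSup S := le_csSup hbdd h0S
  -- lower bound: M ≤ sSup S
  have hlb : M ≤ sSup S := by
    rw [hM]
    have : Finset.univ.sup' hne T ≤ sSup S - 1 / (2 * n) := by
      apply Finset.sup'_le
      intro i _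
      rw [le_sub_iff_add_le, add_comm]
      -- goal : 1 / (2 * n) + T i ≤ sSup S
      rcases le_or_gt (y i) ((2 * (i : ℝ) + 1) / (2 * n)) with hc | hc
      · -- T i = c - y i ; show (i+1)/n - y i ≤ sSup S
        have hTi : T i = (2 * (i : ℝ) + 1) / (2 * n) - y i := by
          rw [hT]
          simp only
          rw [abs_of_nonpos (by linarith), neg_sub]
        rw [hTi]
        have e : 1 / (2 * (n : ℝ)) + (2 * (i : ℝ) + 1) / (2 * n) = ((i : ℝ) + 1) / n := by
          rw [← add_div]
          rw [show (1 + (2 * (i : ℝ) + 1)) = 2 * ((i : ℝ) + 1) by ring,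
            mul_div_mul_left _ _ (two_ne_zero)]
        have goal' : ((i : ℝ) + 1) / n - y i ≤ sSup S := by
          by_cases hyi1 : y i < 1
          · apply le_of_forall_pos_le_add
            intro ε hε
            set a : ℝ := min (y i + ε) 1 with ha_def
            have ha : a ∈ Set.Icc (0 : ℝ) 1 :=
              ⟨le_min (by linarith [(hy i).1]) zero_le_one, min_le_right _ _⟩
            have hya : y i < a := lt_min (by linarith) hyi1
            have hk : (i : ℕ) + 1 ≤ N a := claimD a i hya
            have hvS : |(N a : ℝ) / n - a| ∈ S := ⟨a, ha, rfl⟩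
            have hvD : |(N a : ℝ) / n - a| ≤ sSup S := le_csSup hbdd hvS
            have h1 : ((i : ℝ) + 1) ≤ (N a : ℝ) := by exact_mod_cast hk
            have h2 : ((i : ℝ) + 1) / n ≤ (N a : ℝ) / n := by gcongr
            have h3 : (N a : ℝ) / n - a ≤ |(N a : ℝ) / n - a| := le_abs_self _
            have h4 : a ≤ y i + ε := min_le_left _ _
            linarith
          · -- y i = 1 leads to a contradiction with y i ≤ c < 1
            exfalso
            have hyi : y i = 1 := le_antisymm (hy i).2 (not_lt.mp hyi1)
            have hi1 : 2 * ((i : ℕ) : ℝ) + 1 < 2 * n := by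
              have : (i : ℕ) < n := i.isLt
              have : ((i : ℕ) : ℝ) + 1 ≤ (n : ℝ) := by exact_mod_cast this
              linarith
            have : (2 * (i : ℝ) + 1) / (2 * n) < 1 := by
              rw [div_lt_one (by positivity)]
              exact hi1
            rw [hyi] at hc
            linarith
        linarith
      · -- T i = y i - c ; show y i - i/n ≤ sSup S
        have hTi : T i = y i - (2 * (i : ℝ) + 1) / (2 * n) := by
          rw [hT]
          simp only
          rw [abs_of_pos (by linarith)]
        rw [hTi]
        have hk : N (y i) ≤ (i : ℕ) := claimC i
        have hvS : |(N (y i) : ℝ) / n - y i| ∈ S := ⟨y i, hy i, rfl⟩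
        have hvD : |(N (y i) : ℝ) / n - y i| ≤ sSup S := le_csSup hbdd hvS
        have h1 : (N (y i) : ℝ) ≤ ((i : ℕ) : ℝ) := by exact_mod_cast hk
        have h2 : (N (y i) : ℝ) / n ≤ ((i : ℕ) : ℝ) / n := by gcongr
        have h3 : y i - (N (y i) : ℝ) / n ≤ |(N (y i) : ℝ) / n - y i| := by
          rw [abs_sub_comm]; exact le_abs_self _
        have e : 1 / (2 * (n : ℝ)) - (2 * (i : ℝ) + 1) / (2 * n) = -(((i : ℕ) : ℝ) / n) := by
          field_simp
          ring
        linarith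
    linarith
  have key : sSup S = M := le_antisymm (csSup_le ⟨0, h0S⟩ hub) hlb
  rw [hSD]
  exact key
end

section
/- (Warnock's formula.) For any points x_1, …, x_n ∈ [0,1]^d, the squared L2 star discrepancy satisfies [D_n^{(2)}(x_1, …, x_n)]^2 = 1/3^d − (2^{1−d}/n)·∑_{i=1}^n ∏_{k=1}^d (1 − x_{ik}^2) + (1/n^2)·∑_{i=1}^n ∑_{j=1}^n ∏_{k=1}^d min{1 − x_{ik}, 1 − x_{jk}}. -/
open MeasureTheory

noncomputable section

/-- `L²` star discrepancy of a finite family of points in `[0,1]^d`. -/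
def l2StarDisc {ι : Type*} [Fintype ι] {d : ℕ} (x : ι → Fin d → ℝ) : ℝ :=
  Real.sqrt (∫ a in Set.Icc (0 : Fin d → ℝ) 1,
    (((Finset.univ.filter fun i : ι => ∀ k, x i k < a k).card : ℝ) / (Fintype.card ι : ℝ)
      - ∏ k, a k) ^ 2)

end

open Set

/-- indicator of the pi-Icc of a product is the product of indicators. -/
lemma warnock_aux_indicator_prod {d : ℕ} (f : Fin d → ℝ → ℝ) :
    (Icc (0 : Fin d → ℝ) 1).indicator (fun a => ∏ k, f k (a k))
      = fun a => ∏ k, (Icc (0 : ℝ) 1).indicator (f k) (a k) := by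
  funext a
  by_cases h : a ∈ Icc (0 : Fin d → ℝ) 1
  · rw [Set.indicator_of_mem h]
    refine Finset.prod_congr rfl fun k _ => ?_
    have hk : a k ∈ Icc (0:ℝ) 1 :=
      Set.mem_Icc.2 ⟨(Set.mem_Icc.1 h).1 k, (Set.mem_Icc.1 h).2 k⟩
    exact (Set.indicator_of_mem hk _).symm
  · rw [Set.indicator_of_notMem h]
    have : ¬ ∀ k, a k ∈ Icc (0 : ℝ) 1 := fun hall =>
      h (Set.mem_Icc.2 ⟨fun k => (Set.mem_Icc.1 (hall k)).1,
        fun k => (Set.mem_Icc.1 (hall k)).2⟩)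
    push_neg at this
    obtain ⟨k, hk⟩ := this
    exact (Finset.prod_eq_zero (Finset.mem_univ k)
      (Set.indicator_of_notMem hk _)).symm

lemma warnock_prod_integral {d : ℕ} (f : Fin d → ℝ → ℝ) :
    ∫ a in Icc (0 : Fin d → ℝ) 1, ∏ k, f k (a k)
      = ∏ k, ∫ t in Icc (0 : ℝ) 1, f k t := by
  rw [← integral_indicator measurableSet_Icc, warnock_aux_indicator_prod, volume_pi]
  beta_reduce
  rw [MeasureTheory.integral_fintype_prod_eq_prod (ι := Fin d)
      (fun k => (Icc (0 : ℝ) 1).indicator (f k))]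
  exact Finset.prod_congr rfl fun k _ => integral_indicator measurableSet_Icc

lemma warnock_prod_integrable {d : ℕ} {f : Fin d → ℝ → ℝ}
    (h : ∀ k, IntegrableOn (f k) (Icc (0 : ℝ) 1)) :
    IntegrableOn (fun a : Fin d → ℝ => ∏ k, f k (a k)) (Icc 0 1) := by
  have h2 := Integrable.fintype_prod (𝕜 := ℝ) fun k =>
    (integrable_indicator_iff measurableSet_Icc).2 (h k)
  rw [← warnock_aux_indicator_prod] at h2
  exact (integrable_indicator_iff measurableSet_Icc).1 h2

lemma warnock_intOn {f : ℝ → ℝ} (hm : Measurable f)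
    (hb : ∀ t ∈ Icc (0 : ℝ) 1, |f t| ≤ 1) :
    IntegrableOn f (Icc (0 : ℝ) 1) := by
  refine Measure.integrableOn_of_bounded (by simp) hm.aestronglyMeasurable
    (M := 1) ?_
  filter_upwards [ae_restrict_of_forall_mem measurableSet_Icc hb] with t ht
  simpa using ht

lemma warnock_integral_ite (g : ℝ → ℝ) {c : ℝ} (h0 : 0 ≤ c) (h1 : c ≤ 1) :
    ∫ t in Icc (0 : ℝ) 1, (if c < t then g t else 0) = ∫ t in c..1, g t := by
  have he : (fun t => if c < t then g t else 0) = (Ioi c).indicator g := by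
    funext t
    simp [Set.indicator, Set.mem_Ioi]
  have hset : Ioi c ∩ Icc (0 : ℝ) 1 = Ioc c 1 := by
    ext t
    simp only [mem_inter_iff, mem_Ioi, mem_Icc, mem_Ioc]
    constructor
    · rintro ⟨h, _, h2⟩; exact ⟨h, h2⟩
    · rintro ⟨h, h2⟩; exact ⟨h, le_trans h0 h.le, h2⟩
  rw [he, integral_indicator measurableSet_Ioi, Measure.restrict_restrict
    measurableSet_Ioi, hset, intervalIntegral.integral_of_le h1]

lemma warnock_ite_one {c : ℝ} (h0 : 0 ≤ c) (h1 : c ≤ 1) :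
    ∫ t in Icc (0 : ℝ) 1, (if c < t then (1 : ℝ) else 0) = 1 - c := by
  rw [warnock_integral_ite _ h0 h1, intervalIntegral.integral_const]
  simp

lemma warnock_ite_id {c : ℝ} (h0 : 0 ≤ c) (h1 : c ≤ 1) :
    ∫ t in Icc (0 : ℝ) 1, (if c < t then t else 0) = (1 - c ^ 2) / 2 := by
  rw [warnock_integral_ite _ h0 h1, integral_id]
  ring

lemma warnock_sq : ∫ t in Icc (0 : ℝ) 1, t ^ 2 = 1 / 3 := by
  rw [MeasureTheory.integral_Icc_eq_integral_Ioc,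
    ← intervalIntegral.integral_of_le (by norm_num : (0:ℝ) ≤ 1), integral_pow]
  norm_num

set_option maxHeartbeats 1000000 in
/-- **Warnock's formula** for the squared `L²` star discrepancy. -/
theorem warnock_formula {d n : ℕ} (hn : 0 < n) (x : Fin n → Fin d → ℝ)
    (hx : ∀ i, x i ∈ Set.Icc (0 : Fin d → ℝ) 1) :
    (l2StarDisc x) ^ 2
      = 1 / 3 ^ d
        - (2 : ℝ) ^ ((1 : ℤ) - d) / n * ∑ i, ∏ k, (1 - x i k ^ 2)
        + 1 / (n : ℝ) ^ 2 * ∑ i, ∑ j, ∏ k, min (1 - x i k) (1 - x j k) := by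
  have hN : (n : ℝ) ≠ 0 := Nat.cast_ne_zero.2 hn.ne'
  have hx0 : ∀ i k, 0 ≤ x i k := fun i k => (hx i).1 k
  have hx1 : ∀ i k, x i k ≤ 1 := fun i k => (hx i).2 k
  set F : Fin n → Fin d → ℝ → ℝ := fun i k t => if x i k < t then 1 else 0 with hF
  -- integrability of the 1-d pieces
  have hFm : ∀ i k, Measurable (F i k) := by
    intro i k
    exact Measurable.ite measurableSet_Ioi measurable_const measurable_const
  have hFF_int : ∀ i j k, IntegrableOn (fun t => F i k t * F j k t) (Icc (0:ℝ) 1) := by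
    intro i j k
    refine warnock_intOn ((hFm i k).mul (hFm j k)) fun t ht => ?_
    simp only [hF]
    split_ifs <;> norm_num
  have hFid_int : ∀ i k, IntegrableOn (fun t => F i k t * t) (Icc (0:ℝ) 1) := by
    intro i k
    refine warnock_intOn ((hFm i k).mul measurable_id) fun t ht => ?_
    simp only [hF]
    split_ifs <;> simp [abs_le]; constructor <;> linarith [ht.1, ht.2]
  have hsq_int : IntegrableOn (fun t : ℝ => t ^ 2) (Icc (0:ℝ) 1) := by
    refine warnock_intOn (measurable_id.pow_const 2) fun t ht => ?_
    rw [abs_le]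
    constructor <;> nlinarith [ht.1, ht.2]
  -- card as a sum of products
  have hcard : ∀ a : Fin d → ℝ,
      ((Finset.univ.filter fun i : Fin n => ∀ k, x i k < a k).card : ℝ)
        = ∑ i, ∏ k, F i k (a k) := by
    intro a
    rw [Finset.card_filter]
    push_cast
    refine Finset.sum_congr rfl fun i _ => ?_
    rw [Finset.prod_boole]
    simp [hF]
  -- pointwise expansion of the integrand
  have key : ∀ a : Fin d → ℝ,
      (((Finset.univ.filter fun i : Fin n => ∀ k, x i k < a k).card : ℝ)
          / ((Fintype.card (Fin n)) : ℝ) - ∏ k, a k) ^ 2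
        = (1 / (n:ℝ)^2) * ∑ i, ∑ j, ∏ k, (F i k (a k) * F j k (a k))
          - (2 / (n:ℝ)) * ∑ i, ∏ k, (F i k (a k) * a k)
          + ∏ k, (a k) ^ 2 := by
    intro a
    rw [Fintype.card_fin, hcard a]
    have h1 : (∑ i, ∏ k, F i k (a k)) * (∑ j, ∏ k, F j k (a k))
        = ∑ i, ∑ j, ∏ k, (F i k (a k) * F j k (a k)) := by
      rw [Finset.sum_mul_sum]
      exact Finset.sum_congr rfl fun i _ => Finset.sum_congr rfl fun j _ =>
        (Finset.prod_mul_distrib).symm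
    have h2 : (∑ i, ∏ k, F i k (a k)) * ∏ k, a k
        = ∑ i, ∏ k, (F i k (a k) * a k) := by
      rw [Finset.sum_mul]
      exact Finset.sum_congr rfl fun i _ => (Finset.prod_mul_distrib).symm
    have h3 : (∏ k, a k) * ∏ k, a k = ∏ k, (a k) ^ 2 := by
      rw [← Finset.prod_mul_distrib]
      exact Finset.prod_congr rfl fun k _ => (sq (a k)).symm
    rw [← h1, ← h2, ← h3]
    field_simp
    ring
  -- compute the square of the discrepancy
  rw [l2StarDisc, Real.sq_sqrt (integral_nonneg fun a => sq_nonneg _)]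
  simp only [key]
  -- integrability of the three pieces
  have IA : IntegrableOn
      (fun a : Fin d → ℝ => ∑ i, ∑ j, ∏ k, (F i k (a k) * F j k (a k)))
      (Icc 0 1) := by
    refine integrable_finset_sum _ fun i _ => integrable_finset_sum _ fun j _ => ?_
    exact warnock_prod_integrable (f := fun k t => F i k t * F j k t) fun k => hFF_int i j k
  have IB : IntegrableOn
      (fun a : Fin d → ℝ => ∑ i, ∏ k, (F i k (a k) * a k)) (Icc 0 1) := by
    refine integrable_finset_sum _ fun i _ => ?_
    exact warnock_prod_integrable (f := fun k t => F i k t * t) fun k => hFid_int i k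
  have IC : IntegrableOn (fun a : Fin d → ℝ => ∏ k, (a k) ^ 2) (Icc 0 1) :=
    warnock_prod_integrable (f := fun _ t => t ^ 2) fun k => hsq_int
  have I1 : Integrable (fun a : Fin d → ℝ =>
      1 / (n:ℝ)^2 * ∑ i, ∑ j, ∏ k, (F i k (a k) * F j k (a k))
        - 2 / (n:ℝ) * ∑ i, ∏ k, (F i k (a k) * a k))
      (volume.restrict (Icc 0 1)) := by
    exact (IA.const_mul _).sub (IB.const_mul _)
  have I2 : Integrable (fun a : Fin d → ℝ =>
      1 / (n:ℝ)^2 * ∑ i, ∑ j, ∏ k, (F i k (a k) * F j k (a k)))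
      (volume.restrict (Icc 0 1)) := by exact IA.const_mul _
  have I3 : Integrable (fun a : Fin d → ℝ =>
      2 / (n:ℝ) * ∑ i, ∏ k, (F i k (a k) * a k))
      (volume.restrict (Icc 0 1)) := by exact IB.const_mul _
  -- evaluate the three integrals
  have eA : ∀ i j : Fin n,
      (∫ a in Icc (0 : Fin d → ℝ) 1, ∏ k, (F i k (a k) * F j k (a k)))
        = ∏ k, min (1 - x i k) (1 - x j k) := by
    intro i j
    rw [warnock_prod_integral (fun k t => F i k t * F j k t)]
    refine Finset.prod_congr rfl fun k _ => ?_
    have hpt : (fun t : ℝ => F i k t * F j k t)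
        = fun t => if max (x i k) (x j k) < t then (1:ℝ) else 0 := by
      funext t
      simp only [hF, max_lt_iff]
      by_cases h1 : x i k < t <;> by_cases h2 : x j k < t <;> simp [h1, h2]
    rw [hpt, warnock_ite_one (le_max_of_le_left (hx0 i k))
      (max_le (hx1 i k) (hx1 j k))]
    rcases le_total (x i k) (x j k) with h | h
    · rw [max_eq_right h, min_eq_right (by linarith)]
    · rw [max_eq_left h, min_eq_left (by linarith)]
  have eAA : (∫ a in Icc (0 : Fin d → ℝ) 1,
        ∑ i, ∑ j, ∏ k, (F i k (a k) * F j k (a k)))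
      = ∑ i, ∑ j, ∏ k, min (1 - x i k) (1 - x j k) := by
    rw [integral_finset_sum _ (fun i _ => integrable_finset_sum _ fun j _ =>
      warnock_prod_integrable (f := fun k t => F i k t * F j k t)
        fun k => hFF_int i j k)]
    refine Finset.sum_congr rfl fun i _ => ?_
    rw [integral_finset_sum _ (fun j _ =>
      warnock_prod_integrable (f := fun k t => F i k t * F j k t)
        fun k => hFF_int i j k)]
    exact Finset.sum_congr rfl fun j _ => eA i j
  have eB : ∀ i : Fin n,
      (∫ a in Icc (0 : Fin d → ℝ) 1, ∏ k, (F i k (a k) * a k))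
        = (∏ k, (1 - x i k ^ 2)) / 2 ^ d := by
    intro i
    rw [warnock_prod_integral (fun k t => F i k t * t)]
    have : ∀ k : Fin d, (∫ t in Icc (0:ℝ) 1, F i k t * t) = (1 - x i k ^ 2) / 2 := by
      intro k
      have hpt : (fun t : ℝ => F i k t * t)
          = fun t => if x i k < t then t else 0 := by
        funext t
        simp only [hF]
        split_ifs <;> simp
      rw [hpt, warnock_ite_id (hx0 i k) (hx1 i k)]
    rw [Finset.prod_congr rfl fun k _ => this k, Finset.prod_div_distrib]
    simp
  have eBB : (∫ a in Icc (0 : Fin d → ℝ) 1, ∑ i, ∏ k, (F i k (a k) * a k))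
      = (∑ i, ∏ k, (1 - x i k ^ 2)) / 2 ^ d := by
    rw [integral_finset_sum _ (fun i _ => warnock_prod_integrable
      (f := fun k t => F i k t * t) fun k => hFid_int i k)]
    rw [Finset.sum_congr rfl fun i _ => eB i, Finset.sum_div]
  have eC : (∫ a in Icc (0 : Fin d → ℝ) 1, ∏ k, (a k) ^ 2) = 1 / 3 ^ d := by
    rw [warnock_prod_integral (fun _ t => t ^ 2)]
    simp [warnock_sq, one_div, ← inv_pow]
  rw [integral_add I1 IC, integral_sub I2 I3, integral_const_mul, integral_const_mul,
    eAA, eBB, eC]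
  have h2d : (2:ℝ) ^ ((1:ℤ) - d) = 2 / 2 ^ d := by
    rw [zpow_sub₀ (by norm_num : (2:ℝ) ≠ 0), zpow_one, zpow_natCast]
  rw [h2d]
  have h2 : (2:ℝ) ^ d ≠ 0 := by positivity
  field_simp
  ring
end
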